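/- The curve w̃ in ℓ² defined by w̃(t) = (2√2/π) · Σ_{k=1}^∞ sin(π(k−1/2)t)/(2k−1) · e_k for t ∈ [0,1] satisfies ‖w̃(t) − w̃(s)‖₂ = √|t−s| for all s, t ∈ [0,1]. -/

import Mathlib

open Real Set

lemma bern2 : (Polynomial.map (algebraMap ℚ ℝ) (Polynomial.bernoulli 2)) =
    Polynomial.C (1/6) - Polynomial.X + Polynomial.X^2 := by
  have h : Polynomial.bernoulli 2 = Polynomial.C (1/6) - Polynomial.X + Polynomial.X^2 := by
    simp [Polynomial.bernoulli, Finset.sum_range_succ, bernoulli, bernoulli'_zero,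
      bernoulli'_one, bernoulli'_two, ← Polynomial.X_pow_eq_monomial, ← Polynomial.C_eq_natCast]
    ring
  rw [h]; simp

lemma cos_sum_Icc {θ : ℝ} (hθ : θ ∈ Icc 0 (2*π)) :
    HasSum (fun n : ℕ => Real.cos (n * θ) / (n:ℝ)^2) (θ^2/4 - π*θ/2 + π^2/6) := by
  have hπ : (0:ℝ) < π := Real.pi_pos
  have hx : θ / (2*π) ∈ Icc (0:ℝ) 1 := by
    constructor
    · exact div_nonneg hθ.1 (by positivity)
    · rw [div_le_one (by positivity)]; exact hθ.2
  have h := hasSum_one_div_nat_pow_mul_cos (k := 1) one_ne_zero hx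
  rw [bern2] at h
  convert h using 1
  · funext n
    have hc : 2 * π * n * (θ/(2*π)) = n * θ := by field_simp
    rw [hc]; ring
  · simp only [Polynomial.eval_add, Polynomial.eval_sub, Polynomial.eval_C, Polynomial.eval_X,
      Polynomial.eval_pow, Nat.factorial]
    push_cast
    field_simp
    ring

lemma cos_odd_sum {θ : ℝ} (hθ : θ ∈ Icc 0 π) :
    HasSum (fun n : ℕ => Real.cos ((2*(n:ℝ)+1) * θ) / (2*(n:ℝ)+1)^2) (π^2/8 - π*θ/4) := by
  have hπ : (0:ℝ) < π := Real.pi_pos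
  set f : ℕ → ℝ := fun n => Real.cos (n * θ) / (n:ℝ)^2 with hf
  have hT : HasSum f (θ^2/4 - π*θ/2 + π^2/6) :=
    cos_sum_Icc ⟨hθ.1, hθ.2.trans (by linarith)⟩
  have hE : HasSum (fun n => f (2*n)) (θ^2/4 - π*θ/4 + π^2/24) := by
    have h2 : HasSum (fun n : ℕ => Real.cos (n * (2*θ)) / (n:ℝ)^2)
        ((2*θ)^2/4 - π*(2*θ)/2 + π^2/6) := cos_sum_Icc ⟨by linarith [hθ.1], by linarith [hθ.2]⟩
    have := h2.mul_left (1/4)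
    convert this using 1
    · rfl
    · funext n
      simp only [hf]
      push_cast
      rw [show ((2:ℝ)*n) * θ = n * (2*θ) by ring]
      ring
    · ring
  have hOs : Summable (fun n => f (2*n+1)) := by
    apply Summable.of_norm_bounded (g := fun n : ℕ => 1/((n:ℝ)+1)^2)
    · have := (summable_nat_add_iff 1).mpr (summable_one_div_nat_pow.mpr one_lt_two)
      convert this using 2 with n
      · rfl
      push_cast
      ring
    · intro n
      simp only [hf, norm_div, norm_pow]
      have h2 : ((n:ℝ)+1)^2 ≤ ‖((2*n+1:ℕ):ℝ)‖^2 := by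
        rw [Real.norm_eq_abs]
        push_cast
        rw [abs_of_nonneg (by positivity)]
        nlinarith [Nat.cast_nonneg (α := ℝ) n]
      apply div_le_div₀ zero_le_one _ (by positivity) h2
      rw [Real.norm_eq_abs]; exact Real.abs_cos_le_one _
  obtain ⟨O, hO⟩ := hOs
  have huniq := (hE.even_add_odd hO).unique hT
  have hOval : O = π^2/8 - π*θ/4 := by linarith
  rw [hOval] at hO
  convert hO using 1
  funext n
  simp only [hf]
  push_cast
  ring_nf

lemma comp_sum {s t : ℝ} (hs : s ∈ Icc (0:ℝ) 1) (ht : t ∈ Icc (0:ℝ) 1) :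
    HasSum (fun k : ℕ => ((2 * Real.sqrt 2 / π) * (Real.sin (π * ((k:ℝ) + 1/2) * t) / (2*(k:ℝ)+1))
      - (2 * Real.sqrt 2 / π) * (Real.sin (π * ((k:ℝ) + 1/2) * s) / (2*(k:ℝ)+1)))^2) |t - s| := by
  have hπ : (0:ℝ) < π := Real.pi_pos
  have habs : |t - s| ≤ 1 := by
    rw [abs_le]; constructor <;> [linarith [ht.1, hs.2]; linarith [ht.2, hs.1]]
  have habs0 : 0 ≤ |t - s| := abs_nonneg _
  have h0 := cos_odd_sum (θ := 0) ⟨le_refl 0, hπ.le⟩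
  have h1 := cos_odd_sum (θ := π * t) ⟨mul_nonneg hπ.le ht.1, by nlinarith [ht.2]⟩
  have h2 := cos_odd_sum (θ := π * s) ⟨mul_nonneg hπ.le hs.1, by nlinarith [hs.2]⟩
  have h3 := cos_odd_sum (θ := π * |t - s| / 2) ⟨by positivity, by nlinarith⟩
  have h4 := cos_odd_sum (θ := π * (t + s) / 2)
    ⟨by nlinarith [ht.1, hs.1], by nlinarith [ht.2, hs.2]⟩
  have htot := ((((h0.sub (h1.mul_left (1/2))).sub (h2.mul_left (1/2))).sub h3).add h4).mul_left
    (8 / π^2)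
  have hsq2 : Real.sqrt 2 ^ 2 = 2 := Real.sq_sqrt (by norm_num)
  convert htot using 1
  · rfl
  · funext k
    set A := π * ((k:ℝ) + 1/2) * t with hA
    set B := π * ((k:ℝ) + 1/2) * s with hB
    have hk1 : (2*(k:ℝ)+1) * 0 = 0 := mul_zero _
    have hk2 : (2*(k:ℝ)+1) * (π * t) = A + A := by rw [hA]; ring
    have hk3 : (2*(k:ℝ)+1) * (π * s) = B + B := by rw [hB]; ring
    have hk5 : (2*(k:ℝ)+1) * (π * (t+s) / 2) = A + B := by rw [hA, hB]; ring
    rw [hk1, hk2, hk3, hk5, Real.cos_zero, Real.cos_add, Real.cos_add, Real.cos_add]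
    have hk4 : Real.cos ((2*(k:ℝ)+1) * (π * |t - s| / 2))
        = Real.cos A * Real.cos B + Real.sin A * Real.sin B := by
      rcases le_total s t with h | h
      · rw [abs_of_nonneg (by linarith), show (2*(k:ℝ)+1) * (π * (t-s) / 2) = A - B by
          rw [hA, hB]; ring, Real.cos_sub]
      · rw [abs_of_nonpos (by linarith), show (2*(k:ℝ)+1) * (π * -(t-s) / 2) = B - A by
          rw [hA, hB]; ring, Real.cos_sub]
        ring
    rw [hk4]
    have pA := Real.sin_sq_add_cos_sq A
    have pB := Real.sin_sq_add_cos_sq B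
    have key : (Real.sin A - Real.sin B)^2 =
        1 - (Real.cos A * Real.cos A - Real.sin A * Real.sin A)/2
          - (Real.cos B * Real.cos B - Real.sin B * Real.sin B)/2
          - (Real.cos A * Real.cos B + Real.sin A * Real.sin B)
          + (Real.cos A * Real.cos B - Real.sin A * Real.sin B) := by
      linear_combination (1/2) * pA + (1/2) * pB
    have lhs_eq : ((2 * Real.sqrt 2 / π) * (Real.sin A / (2*(k:ℝ)+1))
        - (2 * Real.sqrt 2 / π) * (Real.sin B / (2*(k:ℝ)+1)))^2
        = (8/π^2) * ((Real.sin A - Real.sin B)^2 / (2*(k:ℝ)+1)^2) := by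
      have hc : (2 * Real.sqrt 2 / π)^2 = 8/π^2 := by
        rw [div_pow, mul_pow, hsq2]; norm_num
      rw [← mul_sub, ← sub_div, mul_pow, hc, div_pow]
    rw [lhs_eq, key]
    ring
  · rcases le_total s t with h | h
    · rw [abs_of_nonneg (by linarith)]
      field_simp
      ring
    · rw [abs_of_nonpos (by linarith)]
      field_simp
      ring

/-- coordinate evaluation as a continuous linear map on ℓ². -/
noncomputable def evalCLM (j : ℕ) : lp (fun _ : ℕ => ℝ) 2 →L[ℝ] ℝ :=
  LinearMap.mkContinuous
    { toFun := fun f => f j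
      map_add' := fun f g => rfl
      map_smul' := fun c f => rfl } 1
    (fun f => by
      show ‖f j‖ ≤ 1 * ‖f‖
      simpa using lp.norm_apply_le_norm (by norm_num : (2:ENNReal) ≠ 0) f j)

theorem stmt_1 (w : ℝ → lp (fun _ : ℕ => ℝ) 2)
    (hw : ∀ t ∈ Set.Icc (0:ℝ) 1,
      HasSum (fun k : ℕ =>
        ((2 * Real.sqrt 2 / Real.pi) *
          (Real.sin (Real.pi * ((k : ℝ) + 1/2) * t) / (2 * (k : ℝ) + 1)))
            • lp.single 2 k (1:ℝ)) (w t)) :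
    ∀ s ∈ Set.Icc (0:ℝ) 1, ∀ t ∈ Set.Icc (0:ℝ) 1,
      ‖w t - w s‖ = Real.sqrt |t - s| := by
  intro s hs t ht
  set a : ℕ → ℝ := fun k =>
    (2 * Real.sqrt 2 / π) * (Real.sin (π * ((k:ℝ) + 1/2) * t) / (2*(k:ℝ)+1))
      - (2 * Real.sqrt 2 / π) * (Real.sin (π * ((k:ℝ) + 1/2) * s) / (2*(k:ℝ)+1)) with ha
  -- the difference has the expected expansion
  have hdiff : HasSum (fun k : ℕ => a k • lp.single 2 k (1:ℝ)) (w t - w s) := by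
    have := (hw t ht).sub (hw s hs)
    convert this using 1
    funext k
    rw [ha, sub_smul]
  -- coordinates of the difference
  have hcoord : ∀ j : ℕ, (w t - w s) j = a j := by
    intro j
    have h := (evalCLM j).hasSum hdiff
    have heq : (fun k : ℕ => evalCLM j (a k • lp.single 2 k (1:ℝ)))
        = fun k : ℕ => if j = k then a k else 0 := by
      funext k
      simp only [evalCLM, LinearMap.mkContinuous_apply, LinearMap.coe_mk, AddHom.coe_mk]
      show (a k • lp.single (E := fun _ : ℕ => ℝ) 2 k (1:ℝ)) j = _
      rw [lp.coeFn_smul]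
      by_cases hjk : j = k
      · subst hjk
        simp [lp.single_apply_self]
      · simp [lp.single_apply_ne 2 k _ hjk, hjk]
    rw [heq] at h
    have h2 : HasSum (fun k : ℕ => if j = k then a k else 0) (a j) := by
      have he : (fun k : ℕ => if j = k then a k else 0)
          = (fun k : ℕ => if k = j then a j else 0) := by
        funext k
        by_cases hjk : j = k
        · simp [hjk]
        · simp [hjk, Ne.symm hjk]
      rw [he]
      exact hasSum_ite_eq j (a j)
    exact h.unique h2
  -- the sum of squares of coordinates
  have hsumsq : HasSum (fun k : ℕ => ‖(w t - w s) k‖ ^ (2:ℝ)) |t - s| := by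
    have := comp_sum hs ht
    convert this using 1 with k
    funext k
    rw [hcoord k, Real.norm_eq_abs, Real.rpow_two, sq_abs, ha]
  -- norm squared
  have hrw := lp.norm_rpow_eq_tsum (p := 2) (by norm_num) (w t - w s)
  rw [ENNReal.toReal_ofNat] at hrw
  have hn2 : ‖w t - w s‖ ^ 2 = |t - s| := by
    rw [← Real.rpow_two, hrw]
    exact hsumsq.tsum_eq
  rw [← hn2, Real.sqrt_sq (norm_nonneg _)]
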